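/- Let f: ℝ^d → ℝ be twice continuously differentiable with l-Lipschitz gradient (‖∇f(x) − ∇f(y)‖ ≤ l‖x − y‖ for all x, y) and γ-Lipschitz Hessian in spectral norm (‖∇²f(x) − ∇²f(y)‖ ≤ γ‖x − y‖ for all x, y). Let x* satisfy ∇f(x*) = 0, let β > 0, suppose ∇²f(x*) + βI is invertible, and set K* = (∇²f(x*) + βI)⁻¹, η = ‖K*‖. If x(t+1) = x(t) − K(t)∇f(x(t)), then with z(t) = x(t) − x* and K̃(t) = K(t) − K*, the bound ‖z(t+1)‖ ≤ (ηγ/2)‖z(t)‖² + ηβ‖z(t)‖ + l‖K̃(t)‖‖z(t)‖ holds. -/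

import Mathlib

/-- The spectral norm (matrix norm induced by the Euclidean 2-norm) of a real matrix. -/
noncomputable def sNorm {d : ℕ} (M : Matrix (Fin d) (Fin d) ℝ) : ℝ :=
  ‖(Matrix.toEuclideanCLM (𝕜 := ℝ) M : EuclideanSpace ℝ (Fin d) →L[ℝ] EuclideanSpace ℝ (Fin d))‖

/-- The action of a real matrix on a Euclidean vector. -/
noncomputable def mApply {d : ℕ} (M : Matrix (Fin d) (Fin d) ℝ)
    (v : EuclideanSpace ℝ (Fin d)) : EuclideanSpace ℝ (Fin d) :=
  Matrix.toEuclideanCLM (𝕜 := ℝ) M v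

/-- The largest eigenvalue of a (symmetric) real matrix, as the supremum of its real spectrum. -/
noncomputable def lamMax {d : ℕ} (M : Matrix (Fin d) (Fin d) ℝ) : ℝ := sSup (spectrum ℝ M)

/-- The smallest eigenvalue of a (symmetric) real matrix, as the infimum of its real spectrum. -/
noncomputable def lamMin {d : ℕ} (M : Matrix (Fin d) (Fin d) ℝ) : ℝ := sInf (spectrum ℝ M)

-- quadratic remainder lemma
theorem quad_rem {d : ℕ}
    (g : EuclideanSpace ℝ (Fin d) → EuclideanSpace ℝ (Fin d))
    (Hf : EuclideanSpace ℝ (Fin d) → Matrix (Fin d) (Fin d) ℝ)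
    (hHf : ∀ x, HasFDerivAt g
      (Matrix.toEuclideanCLM (𝕜 := ℝ) (Hf x) :
        EuclideanSpace ℝ (Fin d) →L[ℝ] EuclideanSpace ℝ (Fin d)) x)
    (γ : ℝ) (hhessLip : ∀ x y, sNorm (Hf x - Hf y) ≤ γ * ‖x - y‖)
    (xstar x : EuclideanSpace ℝ (Fin d)) :
    ‖g x - g xstar - mApply (Hf xstar) (x - xstar)‖ ≤ γ / 2 * ‖x - xstar‖ ^ 2 := by
  set v := x - xstar with hv
  set φ : ℝ → EuclideanSpace ℝ (Fin d) := fun s =>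
    g (xstar + s • v) - g xstar - s • mApply (Hf xstar) v with hφ
  set φ' : ℝ → EuclideanSpace ℝ (Fin d) := fun s =>
    mApply (Hf (xstar + s • v)) v - mApply (Hf xstar) v with hφ'
  have hderiv : ∀ s : ℝ, HasDerivAt φ (φ' s) s := by
    intro s
    have h1 : HasDerivAt (fun s : ℝ => xstar + s • v) v s := by
      simpa using ((hasDerivAt_id s).smul_const v).const_add xstar
    have h2 : HasDerivAt (fun s : ℝ => g (xstar + s • v))
        (mApply (Hf (xstar + s • v)) v) s := by
      exact (hHf (xstar + s • v)).comp_hasDerivAt s h1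
    have h3 : HasDerivAt (fun s : ℝ => s • mApply (Hf xstar) v)
        (mApply (Hf xstar) v) s := by
      simpa using (hasDerivAt_id s).smul_const (mApply (Hf xstar) v)
    exact (h2.sub_const (g xstar)).sub h3
  have key : ∀ ⦃s : ℝ⦄, s ∈ Set.Icc (0:ℝ) 1 → ‖φ s‖ ≤ γ * ‖v‖ ^ 2 * s ^ 2 / 2 := by
    have hB : ∀ s : ℝ, HasDerivAt (fun s => γ * ‖v‖ ^ 2 * s ^ 2 / 2) (γ * ‖v‖ ^ 2 * s) s := by
      intro s
      have := ((hasDerivAt_pow 2 s).const_mul (γ * ‖v‖ ^ 2)).div_const 2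
      refine this.congr_deriv ?_
      simp; ring
    refine image_norm_le_of_norm_deriv_right_le_deriv_boundary
      (fun s _ => (hderiv s).continuousAt.continuousWithinAt)
      (fun s _ => (hderiv s).hasDerivWithinAt) (by simp [hφ]) hB ?_
    intro s hs
    have hb : ‖φ' s‖ ≤ sNorm (Hf (xstar + s • v) - Hf xstar) * ‖v‖ := by
      have : φ' s = Matrix.toEuclideanCLM (𝕜 := ℝ) (Hf (xstar + s • v) - Hf xstar) v := by
        simp [hφ', mApply, map_sub]
      rw [this]
      exact (Matrix.toEuclideanCLM (𝕜 := ℝ) _).le_opNorm v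
    refine hb.trans ?_
    have h2 : sNorm (Hf (xstar + s • v) - Hf xstar) ≤ γ * (s * ‖v‖) := by
      have := hhessLip (xstar + s • v) xstar
      simpa [norm_smul, abs_of_nonneg hs.1] using this
    calc sNorm (Hf (xstar + s • v) - Hf xstar) * ‖v‖ ≤ γ * (s * ‖v‖) * ‖v‖ := by
          apply mul_le_mul_of_nonneg_right h2 (norm_nonneg _)
      _ = γ * ‖v‖ ^ 2 * s := by ring
  have h1 := key (Set.mem_Icc.mpr ⟨zero_le_one, le_refl 1⟩)
  have hx : xstar + v = x := by simp [hv]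
  have : ‖g x - g xstar - mApply (Hf xstar) v‖ ≤ γ * ‖v‖ ^ 2 * 1 ^ 2 / 2 := by
    simpa [hφ, hx] using h1
  calc ‖g x - g xstar - mApply (Hf xstar) v‖ ≤ γ * ‖v‖ ^ 2 * 1 ^ 2 / 2 := this
    _ = γ / 2 * ‖v‖ ^ 2 := by ring

/-- One-step error bound of the IPG estimate update:
`‖z(t+1)‖ ≤ (ηγ/2)‖z(t)‖² + ηβ‖z(t)‖ + l‖K̃(t)‖‖z(t)‖`. -/
theorem one_step_error_bound {d : ℕ}
    (f : EuclideanSpace ℝ (Fin d) → ℝ)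
    (Hf : EuclideanSpace ℝ (Fin d) → Matrix (Fin d) (Fin d) ℝ)
    (hf : ContDiff ℝ 2 f)
    (hHf : ∀ x, HasFDerivAt (gradient f)
      (Matrix.toEuclideanCLM (𝕜 := ℝ) (Hf x) :
        EuclideanSpace ℝ (Fin d) →L[ℝ] EuclideanSpace ℝ (Fin d)) x)
    (l γ : ℝ)
    (hgradLip : ∀ x y, ‖gradient f x - gradient f y‖ ≤ l * ‖x - y‖)
    (hhessLip : ∀ x y, sNorm (Hf x - Hf y) ≤ γ * ‖x - y‖)
    (xstar : EuclideanSpace ℝ (Fin d)) (hcrit : gradient f xstar = 0)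
    (β : ℝ) (hβ : 0 < β) (hinv : IsUnit (Hf xstar + β • 1))
    (Kstar : Matrix (Fin d) (Fin d) ℝ) (hKstar : Kstar = (Hf xstar + β • 1)⁻¹)
    (η : ℝ) (hη : η = sNorm Kstar)
    (x xnext : EuclideanSpace ℝ (Fin d)) (K : Matrix (Fin d) (Fin d) ℝ)
    (hup : xnext = x - mApply K (gradient f x)) :
    ‖xnext - xstar‖ ≤ η * γ / 2 * ‖x - xstar‖ ^ 2 + η * β * ‖x - xstar‖
      + l * sNorm (K - Kstar) * ‖x - xstar‖ := by
  set z := x - xstar with hz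
  set g := gradient f x with hg
  set H := Hf xstar with hH
  -- Kstar * (H + β•1) = 1
  have hdet : IsUnit (H + β • 1).det := (Matrix.isUnit_iff_isUnit_det _).mp hinv
  have hKM : Kstar * (H + β • 1) = 1 := by
    rw [hKstar]; exact Matrix.nonsing_inv_mul _ hdet
  -- mApply identities
  have happ : ∀ (A B : Matrix (Fin d) (Fin d) ℝ) (w : EuclideanSpace ℝ (Fin d)),
      mApply (A * B) w = mApply A (mApply B w) := by
    intro A B w; simp [mApply, map_mul]
  have hone : ∀ w : EuclideanSpace ℝ (Fin d), mApply (1 : Matrix (Fin d) (Fin d) ℝ) w = w := by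
    intro w; simp [mApply, map_one]
  have hz_eq : z = mApply Kstar (mApply (H + β • 1) z) := by
    rw [← happ, hKM, hone]
  have hMz : mApply (H + β • 1) z = mApply H z + β • z := by
    simp [mApply, map_add, map_smul, map_one]
  -- remainder
  set r := g - mApply H z with hr
  have hrem : ‖r‖ ≤ γ / 2 * ‖z‖ ^ 2 := by
    have := quad_rem (gradient f) Hf hHf γ hhessLip xstar x
    simpa [hr, hg, hH, hz, hcrit] using this
  -- gradient bound
  have hgb : ‖g‖ ≤ l * ‖z‖ := by
    have := hgradLip x xstar
    simpa [hg, hcrit, hz] using this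
  -- decomposition
  have hdecomp : xnext - xstar = mApply Kstar (β • z - r) - mApply (K - Kstar) g := by
    have h1 : mApply (K - Kstar) g = mApply K g - mApply Kstar g := by
      simp [mApply, map_sub]
    have h2 : mApply Kstar (β • z - r) = mApply Kstar (mApply H z + β • z) - mApply Kstar g := by
      have : β • z - r = (mApply H z + β • z) - g := by
        rw [hr]; abel
      rw [this, mApply, map_sub]; rfl
    rw [hup, h1, h2, ← hMz, ← hz_eq]
    simp [hz]; abel
  have hη0 : 0 ≤ η := by rw [hη]; exact norm_nonneg _
  have hKt0 : 0 ≤ sNorm (K - Kstar) := norm_nonneg _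
  have hb1 : ‖mApply Kstar (β • z - r)‖ ≤ η * (β * ‖z‖ + γ / 2 * ‖z‖ ^ 2) := by
    have h1 : ‖mApply Kstar (β • z - r)‖ ≤ η * ‖β • z - r‖ := by
      rw [hη, mApply, sNorm]; exact ContinuousLinearMap.le_opNorm _ _
    refine h1.trans (mul_le_mul_of_nonneg_left ?_ hη0)
    calc ‖β • z - r‖ ≤ ‖β • z‖ + ‖r‖ := norm_sub_le _ _
      _ ≤ β * ‖z‖ + γ / 2 * ‖z‖ ^ 2 := by
          rw [norm_smul, Real.norm_eq_abs, abs_of_pos hβ]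
          exact add_le_add_right hrem _
  have hb2 : ‖mApply (K - Kstar) g‖ ≤ sNorm (K - Kstar) * (l * ‖z‖) := by
    calc ‖mApply (K - Kstar) g‖ ≤ sNorm (K - Kstar) * ‖g‖ := by
          rw [mApply, sNorm]; exact ContinuousLinearMap.le_opNorm _ _
      _ ≤ sNorm (K - Kstar) * (l * ‖z‖) := mul_le_mul_of_nonneg_left hgb hKt0
  calc ‖xnext - xstar‖ = ‖mApply Kstar (β • z - r) - mApply (K - Kstar) g‖ := by rw [hdecomp]
    _ ≤ ‖mApply Kstar (β • z - r)‖ + ‖mApply (K - Kstar) g‖ := norm_sub_le _ _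
    _ ≤ η * (β * ‖z‖ + γ / 2 * ‖z‖ ^ 2) + sNorm (K - Kstar) * (l * ‖z‖) :=
        add_le_add hb1 hb2
    _ = η * γ / 2 * ‖z‖ ^ 2 + η * β * ‖z‖ + l * sNorm (K - Kstar) * ‖z‖ := by ring
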